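/- arXiv:2309.08869 — 2 statements merged into one kernel-verified Lean document; each statement's English description precedes it below -/
import Mathlib

section
/- Let D be a positive integer and define the (D+1)×(D+1) real matrix P by P_{i,j} = (2j+1)·₄F₃[−i, i+1, −j, j+1; 1, D+2, −D; 1] for 0 ≤ i, j ≤ D. Then P² = (D+1)² I. -/
open Finset


/-- Pochhammer symbol `(a)_n = a(a+1)⋯(a+n-1)`. -/
noncomputable def poch (a : ℝ) (n : ℕ) : ℝ := ∏ k ∈ Finset.range n, (a + k)

lemma poch_zero (a : ℝ) : poch a 0 = 1 := by simp [poch]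

lemma poch_succ (a : ℝ) (n : ℕ) : poch a (n+1) = poch a n * (a + n) := by
  simp [poch, Finset.prod_range_succ]

lemma poch_cons (a : ℝ) (n : ℕ) : poch a (n+1) = a * poch (a+1) n := by
  rw [poch, Finset.prod_range_succ', poch, mul_comm]
  congr 1
  · simp
  · exact Finset.prod_congr rfl fun k _ => by push_cast; ring

lemma poch_add (a : ℝ) (p q : ℕ) : poch a (p+q) = poch a p * poch (a+p) q := by
  induction q with
  | zero => simp [poch_zero]
  | succ q ih => rw [← Nat.add_assoc, poch_succ, ih, poch_succ]; push_cast; ring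

lemma poch_one (n : ℕ) : poch 1 n = n.factorial := by
  induction n with
  | zero => simp [poch_zero]
  | succ n ih => rw [poch_succ, ih, Nat.factorial_succ]; push_cast; ring

lemma poch_pos {a : ℝ} (ha : 0 < a) (n : ℕ) : 0 < poch a n := by
  apply Finset.prod_pos
  intro k _
  positivity

lemma poch_nat_mul (a : ℕ) (n : ℕ) :
    (a.factorial : ℝ) * poch ((a : ℝ) + 1) n = ((a + n).factorial : ℝ) := by
  induction n with
  | zero => simp [poch_zero]
  | succ n ih =>
    rw [poch_succ, ← mul_assoc, ih, ← Nat.add_assoc, Nat.factorial_succ]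
    push_cast; ring

lemma poch_neg (x : ℝ) (n : ℕ) : poch (-x) n = (-1)^n * poch (x - n + 1) n := by
  induction n generalizing x with
  | zero => simp [poch_zero]
  | succ n ih =>
    rw [poch_succ, ih, show (x : ℝ) - (n+1 : ℕ) + 1 = x - n from by push_cast; ring,
      poch_cons]
    push_cast; ring

lemma poch_eq_zero {a : ℝ} {n : ℕ} (t : ℕ) (ht : t < n) (ha : a + t = 0) : poch a n = 0 :=
  Finset.prod_eq_zero (Finset.mem_range.2 ht) ha

lemma alt_sum_succ (k : ℕ) (f : ℕ → ℝ) :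
    ∑ s ∈ range (k+2), (-1:ℝ)^s * (k+1).choose s * f s
      = (∑ s ∈ range (k+1), (-1:ℝ)^s * k.choose s * f s)
        - ∑ s ∈ range (k+1), (-1:ℝ)^s * k.choose s * f (s+1) := by
  have h2 : ∑ s ∈ range (k+1), (-1:ℝ)^s * (k.choose (s+1)) * f (s+1)
      = f 0 - ∑ s ∈ range (k+1), (-1:ℝ)^s * k.choose s * f s := by
    have h3 := Finset.sum_range_succ' (fun s => (-1:ℝ)^s * k.choose s * f s) (k+1)
    rw [Finset.sum_range_succ (fun s => (-1:ℝ)^s * k.choose s * f s) (k+1)] at h3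
    simp only [Nat.choose_succ_self, Nat.cast_zero, mul_zero, zero_mul, add_zero,
      Nat.choose_zero_right, Nat.cast_one, pow_zero, mul_one, one_mul] at h3
    have h4 : ∑ s ∈ range (k+1), (-1:ℝ)^s * (k.choose (s+1)) * f (s+1)
        = -∑ s ∈ range (k+1), (-1:ℝ)^(s+1) * (k.choose (s+1)) * f (s+1) := by
      rw [← Finset.sum_neg_distrib]
      exact Finset.sum_congr rfl fun s _ => by ring
    rw [h4]
    linarith [h3]
  rw [Finset.sum_range_succ' (fun s => (-1:ℝ)^s * (k+1).choose s * f s) (k+1)]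
  have h1 : ∀ s, (-1:ℝ)^(s+1) * ((k+1).choose (s+1)) * f (s+1)
      = -((-1:ℝ)^s * k.choose s * f (s+1)) - (-1:ℝ)^s * (k.choose (s+1)) * f (s+1) := by
    intro s
    rw [Nat.choose_succ_succ]
    push_cast
    ring
  rw [Finset.sum_congr rfl (fun s _ => h1 s), Finset.sum_sub_distrib, h2]
  simp
  ring

/-- partial fractions -/
lemma pf_sum (j : ℕ) : ∀ x : ℝ, 0 < x →
    ∑ u ∈ range (j+1), (-1:ℝ)^u * j.choose u * (x + u)⁻¹
      = (j.factorial : ℝ) / poch x (j+1) := by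
  induction j with
  | zero => intro x hx; simp [poch_succ, poch_zero]
  | succ j ih =>
    intro x hx
    have key := alt_sum_succ j (fun u => (x + u)⁻¹)
    have h1 : ∀ u : ℕ, (x + (u+1:ℕ)) = ((x+1) + u) := by intro u; push_cast; ring
    have h2 : ∑ s ∈ range (j+1), (-1:ℝ)^s * j.choose s * (x + (s+1:ℕ))⁻¹
        = (j.factorial : ℝ) / poch (x+1) (j+1) := by
      rw [Finset.sum_congr rfl (fun s _ => by rw [h1 s])]
      exact ih (x+1) (by linarith)
    rw [key, h2, ih x hx]
    have hP : poch x (j+1) ≠ 0 := ne_of_gt (poch_pos hx _)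
    have hQ : poch (x+1) (j+1) ≠ 0 := ne_of_gt (poch_pos (by linarith) _)
    have hR : poch x (j+2) = poch x (j+1) * (x + (j+1)) := by
      have := poch_succ x (j+1); rw [this]; push_cast; ring
    have hR2 : poch x (j+2) = x * poch (x+1) (j+1) := poch_cons x (j+1)
    rw [div_sub_div _ _ hP hQ, Nat.factorial_succ]
    rw [div_eq_div_iff (by positivity) (ne_of_gt (poch_pos hx (j+1+1)))]
    push_cast
    linear_combination ((j.factorial:ℝ) * poch (x+1) (j+1)) * hR - ((j.factorial:ℝ) * poch x (j+1)) * hR2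

lemma u_sum (n : ℕ) : ∀ k : ℕ, ∀ a : ℕ,
    ∑ s ∈ range (k+1), (-1:ℝ)^s * k.choose s * ((a+s).choose n : ℝ)
      = if k ≤ n then (-1:ℝ)^k * (a.choose (n-k) : ℝ) else 0 := by
  intro k
  induction k with
  | zero => intro a; simp
  | succ k ih =>
    intro a
    have key := alt_sum_succ k (fun s => ((a+s).choose n : ℝ))
    have h1 : ∀ s : ℕ, ((a + (s+1)).choose n : ℝ) = (((a+1) + s).choose n : ℝ) := by
      intro s; rw [show a + (s+1) = (a+1)+s from by omega]
    have h2 : ∑ s ∈ range (k+1), (-1:ℝ)^s * k.choose s * ((a+(s+1)).choose n : ℝ)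
        = ∑ s ∈ range (k+1), (-1:ℝ)^s * k.choose s * (((a+1)+s).choose n : ℝ) :=
      Finset.sum_congr rfl fun s _ => by rw [h1 s]
    rw [key, h2, ih a, ih (a+1)]
    rcases le_or_gt (k+1) n with h | h
    · rw [if_pos (by omega), if_pos (by omega), if_pos (by omega)]
      have hp : (a+1).choose (n-k) = a.choose (n-k-1) + a.choose (n-k) := by
        rw [show n - k = (n-k-1)+1 from by omega]
        exact Nat.choose_succ_succ a (n-k-1)
      rw [show n - (k+1) = n - k - 1 from by omega, hp]
      push_cast
      ring
    · rcases eq_or_lt_of_le (Nat.lt_succ_iff.mp h) with h2 | h2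
      · rw [if_pos (by omega), if_pos (by omega), if_neg (by omega)]
        rw [show n - k = 0 from by omega]
        simp
      · rw [if_neg (by omega), if_neg (by omega), if_neg (by omega)]
        ring

noncomputable def g (n j : ℕ) : ℝ := poch ((j:ℝ) - n + 1) (2*n)

lemma g_eq_zero {n j : ℕ} (h : j < n) : g n j = 0 := by
  apply poch_eq_zero (n - 1 - j) (by omega)
  have : ((n - 1 - j : ℕ) : ℝ) = (n:ℝ) - 1 - j := by
    push_cast [Nat.cast_sub (show j ≤ n - 1 by omega), Nat.cast_sub (show 1 ≤ n by omega)]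
    ring
  rw [this]; ring

lemma g_fact {m k : ℕ} (h : m ≤ k) :
    ((k-m).factorial : ℝ) * g m k = ((k+m).factorial : ℝ) := by
  have h1 := poch_nat_mul (k - m) (2*m)
  have h2 : (((k-m):ℕ):ℝ) + 1 = (k:ℝ) - m + 1 := by
    push_cast [Nat.cast_sub h]; ring
  rw [h2] at h1
  rw [show k - m + 2*m = k + m from by omega] at h1
  exact h1

lemma g_self (k : ℕ) : g k k = ((2*k).factorial : ℝ) := by
  have := g_fact (le_refl k)
  simpa [Nat.sub_self, show k + k = 2*k from by ring] using this

lemma g_div_fact {m k : ℕ} (h : m ≤ k) :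
    g m k = (k.choose m : ℝ) * ((k+m).choose m : ℝ) * ((m.factorial : ℝ))^2 := by
  have e1 := g_fact h
  have e2 : ((k+m).choose m) * m.factorial * k.factorial = (k+m).factorial := by
    have := Nat.choose_mul_factorial_mul_factorial (show m ≤ k + m by omega)
    rwa [show k + m - m = k from by omega] at this
  have e3 : (k.choose m) * m.factorial * (k-m).factorial = k.factorial :=
    Nat.choose_mul_factorial_mul_factorial h
  have hne : ((k-m).factorial : ℝ) ≠ 0 := by positivity
  apply mul_left_cancel₀ hne
  rw [e1]
  have : ((k+m).choose m : ℝ) * m.factorial * k.factorial = ((k+m).factorial : ℝ) := by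
    exact_mod_cast congrArg (Nat.cast : ℕ → ℝ) e2
  have e3' : (k.choose m : ℝ) * m.factorial * ((k-m).factorial:ℝ) = (k.factorial : ℝ) := by
    exact_mod_cast congrArg (Nat.cast : ℕ → ℝ) e3
  linear_combination (-(((k+m).choose m : ℝ) * (m.factorial:ℝ))) * e3' - this

lemma vdm {m k : ℕ} (h : m ≤ k) :
    (((k+m).choose m : ℕ) : ℝ) = ∑ s ∈ range (k+1), (k.choose s : ℝ) * (m.choose s : ℝ) := by
  have h1 : (k+m).choose m = ∑ s ∈ range (m+1), k.choose s * m.choose (m - s) :=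
    (Nat.add_choose_eq k m m).trans (Finset.Nat.sum_antidiagonal_eq_sum_range_succ_mk _ m)
  have h2 : ∀ s ∈ range (m+1), k.choose s * m.choose (m-s) = k.choose s * m.choose s := by
    intro s hs
    rw [Nat.choose_symm (by simpa using Nat.lt_succ_iff.mp (mem_range.mp hs))]
  rw [Finset.sum_congr rfl h2] at h1
  have h3 : ∑ s ∈ range (m+1), k.choose s * m.choose s
      = ∑ s ∈ range (k+1), k.choose s * m.choose s := by
    apply Finset.sum_subset (Finset.range_subset_range.2 (by omega))
    intro s _ hs
    have : m < s := by simpa using Nat.lt_of_succ_le (Nat.le_of_not_lt (fun hlt => hs (mem_range.2 hlt)))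
    simp [Nat.choose_eq_zero_of_lt this]
  rw [h1, h3]
  push_cast
  ring

lemma inner_eval (k n s : ℕ) (hs : s ≤ k) :
    ∑ m ∈ range (k+1), (-1:ℝ)^m * (k.choose m : ℝ) * (m.choose s : ℝ) * (((n:ℝ)+m+1))⁻¹
      = (-1:ℝ)^s * (k.choose s : ℝ) * ((k-s).factorial : ℝ) * ((n+s).factorial : ℝ)
          / ((n+k+1).factorial : ℝ) := by
  set f : ℕ → ℝ := fun m => (-1:ℝ)^m * (k.choose m : ℝ) * (m.choose s : ℝ) * (((n:ℝ)+m+1))⁻¹ with hf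
  have step1 : ∑ m ∈ range (k+1), f m = ∑ m ∈ Finset.Ico s (k+1), f m := by
    symm
    apply Finset.sum_subset
    · intro x hx; rw [Finset.mem_range]; exact (Finset.mem_Ico.mp hx).2
    · intro x _ hx
      have hxr : x < k + 1 := Finset.mem_range.mp ‹x ∈ range (k+1)›
      have hxs : x < s := by
        by_contra hc
        exact hx (Finset.mem_Ico.mpr ⟨Nat.le_of_not_lt hc, hxr⟩)
      simp [hf, Nat.choose_eq_zero_of_lt hxs]
  have step2 : ∑ m ∈ Finset.Ico s (k+1), f m = ∑ u ∈ range (k+1-s), f (s+u) :=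
    Finset.sum_Ico_eq_sum_range f s (k+1)
  have hrange : k + 1 - s = (k-s) + 1 := by omega
  have step3 : ∀ u, u ≤ k - s → f (s+u)
      = ((-1:ℝ)^s * (k.choose s : ℝ)) * ((-1:ℝ)^u * ((k-s).choose u : ℝ) * (((n:ℝ)+s+1) + u)⁻¹) := by
    intro u hu
    have htri := Nat.choose_mul (n := k) (show s ≤ s + u by omega)
    rw [show s + u - s = u from by omega] at htri
    have htri' : (k.choose (s+u) : ℝ) * ((s+u).choose s : ℝ)
        = (k.choose s : ℝ) * ((k-s).choose u : ℝ) := by exact_mod_cast htri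
    have hx : ((n:ℝ) + (s+u:ℕ) + 1) = ((n:ℝ)+s+1) + u := by push_cast; ring
    simp only [hf, hx, pow_add]
    field_simp
    linear_combination htri'
  rw [step1, step2, hrange, Finset.sum_congr rfl (fun u hu => step3 u (by
      simpa using Nat.lt_succ_iff.mp (Finset.mem_range.mp hu))), ← Finset.mul_sum]
  have hpf := pf_sum (k-s) ((n:ℝ)+s+1) (by positivity)
  rw [hpf]
  have hpoch := poch_nat_mul (n+s) ((k-s)+1)
  rw [show (((n+s:ℕ)):ℝ) + 1 = (n:ℝ)+s+1 from by push_cast; ring] at hpoch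
  rw [show n + s + ((k-s)+1) = n + k + 1 from by omega] at hpoch
  have h1 : poch ((n:ℝ)+s+1) ((k-s)+1) = ((n+k+1).factorial : ℝ) / ((n+s).factorial : ℝ) := by
    rw [eq_div_iff (by positivity)]
    linarith [hpoch]
  rw [h1]
  have hne1 : ((n+k+1).factorial : ℝ) ≠ 0 := by positivity
  have hne2 : ((n+s).factorial : ℝ) ≠ 0 := by positivity
  field_simp

lemma Bval (k n M : ℕ) (hkM : k ≤ M) :
    ∑ m ∈ range (M+1), (-1:ℝ)^m * g m k / ((m.factorial:ℝ)^2 * ((n:ℝ)+m+1))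
      = if k ≤ n then (-1:ℝ)^k * (n.choose k : ℝ) * ((k.factorial : ℝ) * (n.factorial : ℝ))
          / ((n+k+1).factorial : ℝ) else 0 := by
  have step0 : ∑ m ∈ range (M+1), (-1:ℝ)^m * g m k / ((m.factorial:ℝ)^2 * ((n:ℝ)+m+1))
      = ∑ m ∈ range (k+1), (-1:ℝ)^m * g m k / ((m.factorial:ℝ)^2 * ((n:ℝ)+m+1)) := by
    symm
    apply Finset.sum_subset (Finset.range_subset_range.2 (by omega))
    intro x hx hnx
    have hkx : k < x := by
      have := Finset.mem_range.not.mp hnx; omega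
    rw [g_eq_zero hkx]
    simp
  rw [step0]
  have step1 : ∀ m, m ≤ k →
      (-1:ℝ)^m * g m k / ((m.factorial:ℝ)^2 * ((n:ℝ)+m+1))
        = ∑ s ∈ range (k+1),
            (k.choose s : ℝ) * ((-1:ℝ)^m * (k.choose m : ℝ) * (m.choose s : ℝ) * (((n:ℝ)+m+1))⁻¹) := by
    intro m hm
    rw [g_div_fact hm, vdm hm, Finset.mul_sum, Finset.sum_mul, Finset.mul_sum, Finset.sum_div]
    apply Finset.sum_congr rfl
    intro s _
    have h1 : ((m.factorial : ℝ))^2 ≠ 0 := by positivity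
    have h2 : ((n:ℝ)+m+1) ≠ 0 := by positivity
    field_simp
  rw [Finset.sum_congr rfl (fun m hm => step1 m (by
      simpa using Nat.lt_succ_iff.mp (Finset.mem_range.mp hm)))]
  rw [Finset.sum_comm]
  have step2 : ∀ s, s ≤ k →
      (∑ m ∈ range (k+1), (k.choose s : ℝ) * ((-1:ℝ)^m * (k.choose m : ℝ) * (m.choose s : ℝ) * (((n:ℝ)+m+1))⁻¹))
        = ((k.factorial:ℝ) * (n.factorial:ℝ) / ((n+k+1).factorial : ℝ))
            * ((-1:ℝ)^s * (k.choose s : ℝ) * ((n+s).choose n : ℝ)) := by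
    intro s hs
    rw [← Finset.mul_sum, inner_eval k n s hs]
    have e3 : (k.choose s) * s.factorial * (k-s).factorial = k.factorial :=
      Nat.choose_mul_factorial_mul_factorial hs
    have e4 : ((n+s).choose n) * n.factorial * s.factorial = (n+s).factorial := by
      have := Nat.choose_mul_factorial_mul_factorial (show n ≤ n + s by omega)
      rwa [show n + s - n = s from by omega] at this
    have e3' : (k.choose s : ℝ) * (s.factorial:ℝ) * ((k-s).factorial:ℝ) = (k.factorial : ℝ) := by
      exact_mod_cast congrArg (Nat.cast : ℕ → ℝ) e3
    have e4' : ((n+s).choose n : ℝ) * (n.factorial:ℝ) * (s.factorial:ℝ) = ((n+s).factorial : ℝ) := by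
      exact_mod_cast congrArg (Nat.cast : ℕ → ℝ) e4
    have hne : ((n+k+1).factorial : ℝ) ≠ 0 := by positivity
    have key : (k.choose s:ℝ) * ((-1:ℝ)^s * (k.choose s:ℝ) * ((k-s).factorial:ℝ) * ((n+s).factorial:ℝ))
        = ((k.factorial:ℝ) * (n.factorial:ℝ)) * ((-1:ℝ)^s * (k.choose s:ℝ) * (((n+s).choose n):ℝ)) := by
      linear_combination (-((-1:ℝ)^s * ((k.choose s):ℝ) * ((k.choose s):ℝ) * (((k-s).factorial):ℝ))) * e4'
        + (((-1:ℝ)^s * ((k.choose s):ℝ) * (((n+s).choose n):ℝ) * ((n.factorial):ℝ))) * e3'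
    have hgoal := congrArg (fun z => z / ((n+k+1).factorial:ℝ)) key
    linear_combination (1/((n+k+1).factorial:ℝ)) * key
  rw [Finset.sum_congr rfl (fun s hss => step2 s (by
      simpa using Nat.lt_succ_iff.mp (Finset.mem_range.mp hss)))]
  rw [← Finset.mul_sum, u_sum n k n]
  by_cases h : k ≤ n
  · rw [if_pos h, if_pos h, Nat.choose_symm h]
    ring
  · rw [if_neg h, if_neg h, mul_zero]

/-- The terminating hypergeometric sum
`₄F₃[−i, i+1, −j, j+1; 1, D+2, −D; 1] = Σ_{n=0}^{min(i,j)} …`. -/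
noncomputable def F4 (D i j : ℕ) : ℝ :=
  ∑ n ∈ Finset.range (min i j + 1),
    (poch (-(i : ℝ)) n * poch ((i : ℝ) + 1) n * poch (-(j : ℝ)) n * poch ((j : ℝ) + 1) n) /
      (poch 1 n * poch ((D : ℝ) + 2) n * poch (-(D : ℝ)) n * (n.factorial : ℝ))

noncomputable def w (D n : ℕ) : ℝ :=
  (-1:ℝ)^n / (((n.factorial:ℝ))^2 * poch ((D:ℝ)+2) n * poch ((D:ℝ)-n+1) n)

lemma poch_congr {a b : ℝ} (n : ℕ) (h : a = b) : poch a n = poch b n := by rw [h]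

lemma pair_eq (i n : ℕ) : poch (-(i:ℝ)) n * poch ((i:ℝ)+1) n = (-1:ℝ)^n * g n i := by
  rw [poch_neg (i:ℝ) n, g, show 2*n = n + n from by ring, poch_add]
  rw [poch_congr n (show (i:ℝ) - n + 1 + n = (i:ℝ)+1 from by ring)]
  ring

lemma F4_term (D i j n : ℕ) (hn : n ≤ D) :
    (poch (-(i : ℝ)) n * poch ((i : ℝ) + 1) n * poch (-(j : ℝ)) n * poch ((j : ℝ) + 1) n) /
      (poch 1 n * poch ((D : ℝ) + 2) n * poch (-(D : ℝ)) n * (n.factorial : ℝ))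
      = w D n * g n i * g n j := by
  have hnum : poch (-(i : ℝ)) n * poch ((i : ℝ) + 1) n * poch (-(j : ℝ)) n * poch ((j : ℝ) + 1) n
      = ((-1:ℝ)^n * g n i) * ((-1:ℝ)^n * g n j) := by
    rw [← pair_eq i n, ← pair_eq j n]; ring
  rw [hnum, poch_neg (D:ℝ) n, poch_one, w]
  have hP : poch ((D:ℝ)+2) n ≠ 0 := ne_of_gt (poch_pos (by positivity) n)
  have hQ : poch ((D:ℝ)-n+1) n ≠ 0 := by
    apply ne_of_gt (poch_pos _ n)
    have : (n:ℝ) ≤ (D:ℝ) := Nat.cast_le.2 hn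
    linarith
  have hF : (n.factorial : ℝ) ≠ 0 := by positivity
  have hS : (-1:ℝ)^n ≠ 0 := by positivity
  field_simp

lemma F4_eq (D i j : ℕ) (hi : i ≤ D) (hj : j ≤ D) :
    F4 D i j = ∑ n ∈ range (D+1), w D n * g n i * g n j := by
  rw [F4]
  rw [Finset.sum_congr rfl (fun n hn => F4_term D i j n (by
    have := Finset.mem_range.mp hn
    have : n ≤ min i j := by omega
    omega))]
  apply Finset.sum_subset (Finset.range_subset_range.2 (by omega))
  intro x _ hx
  have hx' : min i j < x := by
    have := Finset.mem_range.not.mp hx; omega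
  rcases Nat.lt_or_ge i x with h | h
  · rw [g_eq_zero h]; ring
  · have : j < x := by omega
    rw [g_eq_zero this]; ring

lemma telescope (n m : ℕ) : ∀ N : ℕ,
    ((n:ℝ)+m+1) * ∑ j ∈ range N, (2*(j:ℝ)+1) * (g n j * g m j)
      = poch ((N:ℝ)-n) (2*n+1) * poch ((N:ℝ)-m) (2*m+1) := by
  intro N
  induction N with
  | zero =>
    rw [Finset.range_zero, Finset.sum_empty, mul_zero]
    rw [poch_eq_zero n (by omega) (by push_cast; ring)]
    ring
  | succ N ih =>
    rw [Finset.sum_range_succ, mul_add, ih]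
    have key : ∀ p : ℕ, ∀ c : ℝ, c = (N:ℝ) - p →
        poch (((N+1:ℕ):ℝ) - p) (2*p+1) = g p N * (c + 1 + 2*p) ∧
        poch ((N:ℝ)-p) (2*p+1) = c * g p N := by
      intro p c hc
      constructor
      · rw [poch_congr (2*p+1) (show ((N+1:ℕ):ℝ) - p = ((N:ℝ)-p+1) from by push_cast; ring)]
        rw [poch_succ ((N:ℝ)-p+1) (2*p), g]
        rw [hc]; push_cast; ring
      · rw [poch_cons ((N:ℝ)-p) (2*p)]
        rw [poch_congr (2*p) (show (N:ℝ)-p+1 = (N:ℝ)-p+1 from rfl), g, hc]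
    obtain ⟨a1, a2⟩ := key n ((N:ℝ)-n) rfl
    obtain ⟨b1, b2⟩ := key m ((N:ℝ)-m) rfl
    rw [a1, b1, a2, b2]
    push_cast
    ring

lemma wG (D n : ℕ) (hn : n ≤ D) :
    w D n * poch (((D+1:ℕ):ℝ)-n) (2*n+1)
      = (-1:ℝ)^n * ((D:ℝ)+1) / ((n.factorial:ℝ))^2 := by
  have h1 : poch (((D+1:ℕ):ℝ)-n) (2*n+1)
      = poch ((D:ℝ)-n+1) n * (((D:ℝ)+1) * poch ((D:ℝ)+2) n) := by
    rw [poch_congr (2*n+1) (show (((D+1:ℕ):ℝ)-n) = (D:ℝ)-n+1 from by push_cast; ring)]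
    rw [show 2*n+1 = n + (n+1) from by ring, poch_add]
    rw [poch_congr (n+1) (show (D:ℝ)-n+1+n = (D:ℝ)+1 from by ring)]
    rw [poch_cons ((D:ℝ)+1) n]
    rw [poch_congr n (show (D:ℝ)+1+1 = (D:ℝ)+2 from by ring)]
  rw [h1, w]
  have hP : poch ((D:ℝ)+2) n ≠ 0 := ne_of_gt (poch_pos (by positivity) n)
  have hQ : poch ((D:ℝ)-n+1) n ≠ 0 := by
    apply ne_of_gt (poch_pos _ n)
    have : (n:ℝ) ≤ (D:ℝ) := Nat.cast_le.2 hn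
    linarith
  have hF : (n.factorial : ℝ) ≠ 0 := by positivity
  field_simp

lemma F4_symm (D i j : ℕ) : F4 D i j = F4 D j i := by
  rw [F4, F4, min_comm]
  exact Finset.sum_congr rfl fun n _ => by ring

lemma T_le (D i k : ℕ) (hi : i ≤ D) (hk : k ≤ D) (hik : i ≤ k) :
    ∑ n ∈ range (D+1), ∑ m ∈ range (D+1),
        ((-1:ℝ)^n * g n i / ((n.factorial:ℝ))^2)
          * ((-1:ℝ)^m * g m k / ((m.factorial:ℝ)^2 * ((n:ℝ)+m+1)))
      = if i = k then 1/(2*(k:ℝ)+1) else 0 := by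
  have hsum : ∀ n, ∑ m ∈ range (D+1),
      ((-1:ℝ)^n * g n i / ((n.factorial:ℝ))^2)
        * ((-1:ℝ)^m * g m k / ((m.factorial:ℝ)^2 * ((n:ℝ)+m+1)))
      = ((-1:ℝ)^n * g n i / ((n.factorial:ℝ))^2)
        * ∑ m ∈ range (D+1), (-1:ℝ)^m * g m k / ((m.factorial:ℝ)^2 * ((n:ℝ)+m+1)) := by
    intro n
    rw [Finset.mul_sum]
  rw [Finset.sum_congr rfl (fun n _ => by rw [hsum n, Bval k n D hk])]
  rcases eq_or_lt_of_le hik with heq | hlt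
  · subst heq
    rw [if_pos rfl]
    rw [Finset.sum_eq_single_of_mem i (Finset.mem_range.2 (by omega))]
    · rw [if_pos le_rfl, g_self, Nat.choose_self]
      have h2k : i + i + 1 = 2*i+1 := by ring
      rw [h2k, show (2*i+1) = (2*i)+1 from rfl, Nat.factorial_succ]
      have hsign : (-1:ℝ)^i * (-1:ℝ)^i = 1 := by rw [← mul_pow]; norm_num
      have hf1 : ((2*i).factorial : ℝ) ≠ 0 := by positivity
      have hf2 : (i.factorial : ℝ) ≠ 0 := by positivity
      have hf3 : (2*(i:ℝ)+1) ≠ 0 := by positivity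
      push_cast
      field_simp
      linear_combination hsign
    · intro n _ hne
      by_cases hkn : i ≤ n
      · have : i < n := by omega
        rw [g_eq_zero this]
        simp
      · rw [if_neg hkn, mul_zero]
  · rw [if_neg (by omega)]
    apply Finset.sum_eq_zero
    intro n _
    by_cases hkn : k ≤ n
    · have : i < n := by omega
      rw [g_eq_zero this]
      simp
    · rw [if_neg hkn, mul_zero]

lemma Tlemma (D i k : ℕ) (hi : i ≤ D) (hk : k ≤ D) :
    ∑ n ∈ range (D+1), ∑ m ∈ range (D+1),
        ((-1:ℝ)^n * g n i / ((n.factorial:ℝ))^2)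
          * ((-1:ℝ)^m * g m k / ((m.factorial:ℝ)^2 * ((n:ℝ)+m+1)))
      = if i = k then 1/(2*(k:ℝ)+1) else 0 := by
  rcases le_or_gt i k with h | h
  · exact T_le D i k hi hk h
  · rw [Finset.sum_comm]
    have swap : ∀ m n : ℕ,
        ((-1:ℝ)^n * g n i / ((n.factorial:ℝ))^2)
          * ((-1:ℝ)^m * g m k / ((m.factorial:ℝ)^2 * ((n:ℝ)+m+1)))
        = ((-1:ℝ)^m * g m k / ((m.factorial:ℝ))^2)
          * ((-1:ℝ)^n * g n i / ((n.factorial:ℝ)^2 * ((m:ℝ)+n+1))) := by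
      intro m n
      rw [show (n:ℝ)+m+1 = (m:ℝ)+n+1 from by ring]
      have h1 : (n.factorial:ℝ) ≠ 0 := by positivity
      have h2 : (m.factorial:ℝ) ≠ 0 := by positivity
      have h3 : ((m:ℝ)+n+1) ≠ 0 := by positivity
      field_simp
    rw [Finset.sum_congr rfl (fun m _ => Finset.sum_congr rfl (fun n _ => swap m n))]
    rw [T_le D k i hk hi (le_of_lt h)]
    rw [if_neg (by omega), if_neg (by omega)]

lemma sum_sum_mul (s t : Finset ℕ) (c : ℝ) (A B : ℕ → ℝ) :
    c * ((∑ n ∈ s, A n) * (∑ m ∈ t, B m)) = ∑ n ∈ s, ∑ m ∈ t, c * (A n * B m) := by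
  rw [Finset.sum_mul_sum, Finset.mul_sum]
  exact Finset.sum_congr rfl fun n _ => by rw [Finset.mul_sum]

lemma entry (D i k : ℕ) (hi : i ≤ D) (hk : k ≤ D) :
    ∑ j ∈ range (D+1), (2*(j:ℝ)+1) * F4 D i j * ((2*(k:ℝ)+1) * F4 D k j)
      = if i = k then ((D:ℝ)+1)^2 else 0 := by
  have step1 : ∀ j ∈ range (D+1),
      (2*(j:ℝ)+1) * F4 D i j * ((2*(k:ℝ)+1) * F4 D k j)
        = ∑ n ∈ range (D+1), ∑ m ∈ range (D+1),
            ((2*(j:ℝ)+1) * (2*(k:ℝ)+1))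
              * ((w D n * g n i * g n j) * (w D m * g m k * g m j)) := by
    intro j hj
    have hjD : j ≤ D := by have := Finset.mem_range.mp hj; omega
    rw [F4_eq D i j hi hjD, F4_eq D k j hk hjD, mul_mul_mul_comm, sum_sum_mul]
  rw [Finset.sum_congr rfl step1, Finset.sum_comm]
  rw [Finset.sum_congr rfl (fun n _ => Finset.sum_comm)]
  have step2 : ∀ n ∈ range (D+1), ∀ m ∈ range (D+1),
      ∑ j ∈ range (D+1), ((2*(j:ℝ)+1) * (2*(k:ℝ)+1))
          * ((w D n * g n i * g n j) * (w D m * g m k * g m j))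
        = (2*(k:ℝ)+1) * (((D:ℝ)+1)^2
            * (((-1:ℝ)^n * g n i / ((n.factorial:ℝ))^2)
              * ((-1:ℝ)^m * g m k / ((m.factorial:ℝ)^2 * ((n:ℝ)+m+1))))) := by
    intro n hn m hm
    have hnD : n ≤ D := by have := Finset.mem_range.mp hn; omega
    have hmD : m ≤ D := by have := Finset.mem_range.mp hm; omega
    have hfac : ∑ j ∈ range (D+1), ((2*(j:ℝ)+1) * (2*(k:ℝ)+1))
          * ((w D n * g n i * g n j) * (w D m * g m k * g m j))
        = ((2*(k:ℝ)+1) * ((w D n * g n i) * (w D m * g m k)))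
            * ∑ j ∈ range (D+1), (2*(j:ℝ)+1) * (g n j * g m j) := by
      rw [Finset.mul_sum]
      exact Finset.sum_congr rfl fun j _ => by ring
    rw [hfac]
    have hnm : ((n:ℝ)+m+1) ≠ 0 := by positivity
    have htel : ∑ j ∈ range (D+1), (2*(j:ℝ)+1) * (g n j * g m j)
        = poch (((D+1:ℕ):ℝ)-n) (2*n+1) * poch (((D+1:ℕ):ℝ)-m) (2*m+1) / ((n:ℝ)+m+1) := by
      rw [eq_div_iff hnm, mul_comm]
      exact telescope n m (D+1)
    rw [htel]
    have e1 := wG D n hnD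
    have e2 := wG D m hmD
    have rearr : ((2*(k:ℝ)+1) * ((w D n * g n i) * (w D m * g m k)))
          * (poch (((D+1:ℕ):ℝ)-n) (2*n+1) * poch (((D+1:ℕ):ℝ)-m) (2*m+1) / ((n:ℝ)+m+1))
        = (2*(k:ℝ)+1) * ((w D n * poch (((D+1:ℕ):ℝ)-n) (2*n+1))
            * (w D m * poch (((D+1:ℕ):ℝ)-m) (2*m+1)) * (g n i * g m k) / ((n:ℝ)+m+1)) := by
      ring
    rw [rearr, e1, e2]
    have h1 : (n.factorial:ℝ) ≠ 0 := by positivity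
    have h2 : (m.factorial:ℝ) ≠ 0 := by positivity
    field_simp
  calc ∑ n ∈ range (D+1), ∑ m ∈ range (D+1),
        ∑ j ∈ range (D+1), ((2*(j:ℝ)+1) * (2*(k:ℝ)+1))
          * ((w D n * g n i * g n j) * (w D m * g m k * g m j))
      = ∑ n ∈ range (D+1), ∑ m ∈ range (D+1),
          (2*(k:ℝ)+1) * (((D:ℝ)+1)^2
            * (((-1:ℝ)^n * g n i / ((n.factorial:ℝ))^2)
              * ((-1:ℝ)^m * g m k / ((m.factorial:ℝ)^2 * ((n:ℝ)+m+1))))) :=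
        Finset.sum_congr rfl fun n hn => Finset.sum_congr rfl fun m hm => step2 n hn m hm
    _ = ((2*(k:ℝ)+1) * ((D:ℝ)+1)^2) * ∑ n ∈ range (D+1), ∑ m ∈ range (D+1),
          (((-1:ℝ)^n * g n i / ((n.factorial:ℝ))^2)
            * ((-1:ℝ)^m * g m k / ((m.factorial:ℝ)^2 * ((n:ℝ)+m+1)))) := by
        rw [Finset.mul_sum]
        exact Finset.sum_congr rfl fun n _ => by
          rw [Finset.mul_sum]
          exact Finset.sum_congr rfl fun m _ => by ring
    _ = if i = k then ((D:ℝ)+1)^2 else 0 := by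
        rw [Tlemma D i k hi hk]
        by_cases h : i = k
        · rw [if_pos h, if_pos h]
          have : (2*(k:ℝ)+1) ≠ 0 := by positivity
          field_simp
        · rw [if_neg h, if_neg h, mul_zero]

/-- The matrix `P` with entries `P_{i,j} = (2j+1)·₄F₃[−i,i+1,−j,j+1;1,D+2,−D;1]`. -/
noncomputable def Pmat (D : ℕ) : Matrix (Fin (D + 1)) (Fin (D + 1)) ℝ :=
  fun i j => (2 * ((j : ℕ) : ℝ) + 1) * F4 D (i : ℕ) (j : ℕ)

theorem P_sq (D : ℕ) (hD : 0 < D) :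
    Pmat D * Pmat D = (((D : ℝ) + 1) ^ 2) • (1 : Matrix (Fin (D + 1)) (Fin (D + 1)) ℝ) := by
  ext i k
  rw [Matrix.mul_apply]
  simp only [Pmat, Matrix.smul_apply, smul_eq_mul]
  have hconv : ∑ j : Fin (D+1), (2 * ((j:ℕ):ℝ) + 1) * F4 D (i:ℕ) (j:ℕ)
        * ((2 * ((k:ℕ):ℝ) + 1) * F4 D (j:ℕ) (k:ℕ))
      = ∑ j ∈ range (D+1), (2*(j:ℝ)+1) * F4 D (i:ℕ) j * ((2*((k:ℕ):ℝ)+1) * F4 D (k:ℕ) j) := by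
    rw [Fin.sum_univ_eq_sum_range (fun j =>
      (2 * ((j:ℕ):ℝ) + 1) * F4 D (i:ℕ) j * ((2 * ((k:ℕ):ℝ) + 1) * F4 D j (k:ℕ))) (D+1)]
    exact Finset.sum_congr rfl fun j _ => by rw [F4_symm D j (k:ℕ)]
  have goal1 : ∑ j : Fin (D+1), (2 * ((j:ℕ):ℝ) + 1) * F4 D (i:ℕ) (j:ℕ)
        * ((2 * ((k:ℕ):ℝ) + 1) * F4 D (j:ℕ) (k:ℕ))
      = if (i:ℕ) = (k:ℕ) then ((D:ℝ)+1)^2 else 0 := by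
    rw [hconv]
    exact entry D (i:ℕ) (k:ℕ) (Fin.is_le i) (Fin.is_le k)
  rw [goal1]
  by_cases h : i = k
  · subst h
    rw [if_pos rfl, Matrix.one_apply_eq]
    ring
  · rw [if_neg (fun hc => h (Fin.ext hc)), Matrix.one_apply_ne h, mul_zero]
end

section
/- With D, A, A*, P as in the Leonard pair setup, P A* = A P. -/
/-- `a_i = 3i(i+1)/(D(D+2))`. -/
noncomputable def aa (D i : ℕ) : ℝ := 3 * (i : ℝ) * ((i : ℝ) + 1) / ((D : ℝ) * ((D : ℝ) + 2))

/-- `b_i = 3(D−i)(i+1)(D+i+2)/(D(D+2)(2i+1))`. -/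
noncomputable def bb (D i : ℕ) : ℝ :=
  3 * ((D : ℝ) - i) * ((i : ℝ) + 1) * ((D : ℝ) + i + 2) /
    ((D : ℝ) * ((D : ℝ) + 2) * (2 * (i : ℝ) + 1))

/-- `c_i = 3(D−i+1)i(D+i+1)/(D(D+2)(2i+1))`. -/
noncomputable def cc (D i : ℕ) : ℝ :=
  3 * ((D : ℝ) - i + 1) * (i : ℝ) * ((D : ℝ) + i + 1) /
    ((D : ℝ) * ((D : ℝ) + 2) * (2 * (i : ℝ) + 1))

/-- `θ_i = 3 − 2a_i = 3 − 6i(i+1)/(D(D+2))`. -/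
noncomputable def theta (D i : ℕ) : ℝ := 3 - 2 * aa D i

/-- The irreducible tridiagonal matrix `A`. -/
noncomputable def Amat (D : ℕ) : Matrix (Fin (D + 1)) (Fin (D + 1)) ℝ :=
  fun i j =>
    if (i : ℕ) = (j : ℕ) then aa D (i : ℕ)
    else if (j : ℕ) = (i : ℕ) + 1 then bb D (i : ℕ)
    else if (i : ℕ) = (j : ℕ) + 1 then cc D (i : ℕ)
    else 0

/-- The diagonal matrix `A* = diag(θ_0,…,θ_D)`. -/
noncomputable def Astar (D : ℕ) : Matrix (Fin (D + 1)) (Fin (D + 1)) ℝ :=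
  Matrix.diagonal fun i => theta D (i : ℕ)


set_option maxHeartbeats 1000000

section PAuxSection
namespace PAux

noncomputable def pp (x : ℝ) (n : ℕ) : ℝ := poch (-x) n * poch (x + 1) n

noncomputable def dd (D : ℕ) (n : ℕ) : ℝ :=
  poch 1 n * poch ((D : ℝ) + 2) n * poch (-(D : ℝ)) n * (n.factorial : ℝ)

lemma poch_zero (a : ℝ) : poch a 0 = 1 := Finset.prod_range_zero _

lemma poch_succ (a : ℝ) (n : ℕ) : poch a (n + 1) = poch a n * (a + n) :=
  Finset.prod_range_succ _ n

lemma poch_cast_eq_zero {i n : ℕ} (h : i < n) : poch (-(i : ℝ)) n = 0 := by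
  apply Finset.prod_eq_zero (Finset.mem_range.mpr h)
  simp

lemma poch_pos {a : ℝ} (ha : 0 < a) (n : ℕ) : 0 < poch a n := by
  apply Finset.prod_pos
  intro k _
  positivity

lemma poch_neg_ne_zero {D n : ℕ} (h : n ≤ D) : poch (-(D : ℝ)) n ≠ 0 := by
  rw [poch]
  apply Finset.prod_ne_zero_iff.mpr
  intro k hk
  have hk' : k < n := Finset.mem_range.mp hk
  have : (k : ℝ) < (D : ℝ) := by exact_mod_cast lt_of_lt_of_le hk' h
  intro hzero
  linarith

lemma dd_ne_zero {D n : ℕ} (h : n ≤ D) : dd D n ≠ 0 := by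
  have h1 : (0:ℝ) < poch 1 n := poch_pos one_pos n
  have h2 : (0:ℝ) < poch ((D : ℝ) + 2) n := poch_pos (by positivity) n
  have h3 := poch_neg_ne_zero h
  have h4 : ((n.factorial : ℝ)) ≠ 0 := by positivity
  rw [dd]
  exact mul_ne_zero (mul_ne_zero (mul_ne_zero (ne_of_gt h1) (ne_of_gt h2)) h3) h4

lemma dd_zero (D : ℕ) : dd D 0 = 1 := by simp [dd, poch_zero]

lemma dd_succ (D n : ℕ) : dd D (n + 1) =
    dd D n * ((1 + n) * (((D : ℝ) + 2) + n) * (-(D : ℝ) + n) * (n + 1)) := by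
  rw [dd, dd, poch_succ, poch_succ, poch_succ, Nat.factorial_succ]
  push_cast
  ring

lemma pp_zero (x : ℝ) : pp x 0 = 1 := by simp [pp, poch_zero]

lemma pp_succ (x : ℝ) (n : ℕ) :
    pp x (n + 1) = pp x n * (((n : ℝ) - x) * ((n : ℝ) + x + 1)) := by
  rw [pp, pp, poch_succ, poch_succ]; ring

lemma pp_cast_eq_zero {j n : ℕ} (h : j < n) : pp (j : ℝ) n = 0 := by
  rw [pp, poch_cast_eq_zero h, zero_mul]

lemma R1 (x : ℝ) : ∀ n : ℕ, ((n : ℝ) - x - 1) * pp (x + 1) n = -((n : ℝ) + x + 1) * pp x n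
  | 0 => by simp [pp_zero]; ring
  | n + 1 => by
    have ih := R1 x n
    rw [pp_succ, pp_succ]
    push_cast
    linear_combination (((n : ℝ) - x) * ((n : ℝ) + x + 2)) * ih

lemma R2 (x : ℝ) : ∀ n : ℕ, ((n : ℝ) + x) * pp (x - 1) n = (x - (n : ℝ)) * pp x n
  | 0 => by simp [pp_zero]
  | n + 1 => by
    have ih := R2 x n
    rw [pp_succ, pp_succ]
    push_cast
    linear_combination (((n : ℝ) + 1 + x) * ((n : ℝ) - x + 1)) * ih

lemma pp_up (x : ℝ) (n : ℕ) :
    pp (x + 1) (n + 1) = -(((n : ℝ) + x + 1) * ((n : ℝ) + x + 2)) * pp x n := by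
  rw [pp_succ]
  linear_combination ((n : ℝ) + x + 2) * R1 x n

lemma pp_down (x : ℝ) (n : ℕ) :
    pp (x - 1) (n + 1) = -((((n : ℝ) + 1 - x) * ((n : ℝ) - x))) * pp x n := by
  rw [pp_succ]
  linear_combination ((n : ℝ) - x + 1) * R2 x n

lemma sum_key (D j : ℕ) (hD : 1 ≤ D) (hj : j ≤ D) (x : ℝ) (hx : 2 * x + 1 ≠ 0) :
    3 * ((D:ℝ) - x + 1) * x * ((D:ℝ) + x + 1) / ((D:ℝ) * ((D:ℝ) + 2) * (2 * x + 1)) *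
        (∑ n ∈ Finset.range (j + 1), pp (x - 1) n * pp (j:ℝ) n / dd D n) +
      3 * x * (x + 1) / ((D:ℝ) * ((D:ℝ) + 2)) *
        (∑ n ∈ Finset.range (j + 1), pp x n * pp (j:ℝ) n / dd D n) +
      3 * ((D:ℝ) - x) * (x + 1) * ((D:ℝ) + x + 2) / ((D:ℝ) * ((D:ℝ) + 2) * (2 * x + 1)) *
        (∑ n ∈ Finset.range (j + 1), pp (x + 1) n * pp (j:ℝ) n / dd D n) =
      (3 - 6 * (j:ℝ) * ((j:ℝ) + 1) / ((D:ℝ) * ((D:ℝ) + 2))) *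
        (∑ n ∈ Finset.range (j + 1), pp x n * pp (j:ℝ) n / dd D n) := by
  have hd0 : ((D:ℝ)) ≠ 0 := by
    have : (0:ℝ) < (D:ℝ) := by exact_mod_cast hD
    linarith
  have hd2 : ((D:ℝ)) + 2 ≠ 0 := by positivity
  let f : ℕ → ℝ := fun n =>
    Nat.casesOn n 0 (fun m => -(6 / ((D:ℝ) * ((D:ℝ) + 2))) * (pp x m * pp (j:ℝ) (m+1) / dd D m))
  have f0 : f 0 = 0 := rfl
  have fs : ∀ m : ℕ, f (m+1) = -(6 / ((D:ℝ) * ((D:ℝ) + 2))) * (pp x m * pp (j:ℝ) (m+1) / dd D m) :=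
    fun m => rfl
  have per : ∀ n ∈ Finset.range (j + 1),
      3 * ((D:ℝ) - x + 1) * x * ((D:ℝ) + x + 1) / ((D:ℝ) * ((D:ℝ) + 2) * (2 * x + 1)) *
          (pp (x - 1) n * pp (j:ℝ) n / dd D n) +
        3 * x * (x + 1) / ((D:ℝ) * ((D:ℝ) + 2)) * (pp x n * pp (j:ℝ) n / dd D n) +
        3 * ((D:ℝ) - x) * (x + 1) * ((D:ℝ) + x + 2) / ((D:ℝ) * ((D:ℝ) + 2) * (2 * x + 1)) *
          (pp (x + 1) n * pp (j:ℝ) n / dd D n) -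
        (3 - 6 * (j:ℝ) * ((j:ℝ) + 1) / ((D:ℝ) * ((D:ℝ) + 2))) * (pp x n * pp (j:ℝ) n / dd D n)
        = f (n + 1) - f n := by
    intro n hn
    have hnj : n ≤ j := Nat.lt_succ_iff.mp (Finset.mem_range.mp hn)
    match n with
    | 0 =>
      rw [f0, fs 0]
      simp only [pp_succ, pp_zero, dd_zero, Nat.cast_zero]
      push_cast
      field_simp [show x * 2 + 1 ≠ 0 by rwa [mul_comm] at hx]
      ring
    | Nat.succ m =>
      have hdm : dd D m ≠ 0 := dd_ne_zero (by omega)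
      have hdm1 : dd D (m + 1) ≠ 0 := dd_ne_zero (by omega)
      have hmd : -(D:ℝ) + (m:ℝ) ≠ 0 := by
        have : (m:ℝ) < (D:ℝ) := by exact_mod_cast (by omega : m < D)
        intro h; linarith
      have h1m : (1:ℝ) + (m:ℝ) ≠ 0 := by positivity
      have h2m : ((D:ℝ) + 2) + (m:ℝ) ≠ 0 := by positivity
      have hm1 : (m:ℝ) + 1 ≠ 0 := by positivity
      have hrho : ((1:ℝ) + (m:ℝ)) * (((D:ℝ) + 2) + (m:ℝ)) * (-(D:ℝ) + (m:ℝ)) * ((m:ℝ) + 1) ≠ 0 :=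
        mul_ne_zero (mul_ne_zero (mul_ne_zero h1m h2m) hmd) hm1
      have hrec : ∀ a : ℝ, a / dd D m
          = a * (((1:ℝ) + (m:ℝ)) * (((D:ℝ) + 2) + (m:ℝ)) * (-(D:ℝ) + (m:ℝ)) * ((m:ℝ) + 1))
            / dd D (m + 1) := by
        intro a
        rw [dd_succ D m]
        rw [eq_div_iff (mul_ne_zero hdm hrho)]
        field_simp
      rw [fs (m+1), fs m, hrec]
      rw [pp_down x m, pp_up x m, pp_succ x m, pp_succ (j:ℝ) (m+1), pp_succ (j:ℝ) m]
      push_cast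
      field_simp [show x * 2 + 1 ≠ 0 by rwa [mul_comm] at hx]
      ring
  have tele := Finset.sum_range_sub f (j + 1)
  have hz : pp (j:ℝ) (j+1) = 0 := pp_cast_eq_zero (Nat.lt_succ_self j)
  have main : ∑ n ∈ Finset.range (j + 1),
      (3 * ((D:ℝ) - x + 1) * x * ((D:ℝ) + x + 1) / ((D:ℝ) * ((D:ℝ) + 2) * (2 * x + 1)) *
          (pp (x - 1) n * pp (j:ℝ) n / dd D n) +
        3 * x * (x + 1) / ((D:ℝ) * ((D:ℝ) + 2)) * (pp x n * pp (j:ℝ) n / dd D n) +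
        3 * ((D:ℝ) - x) * (x + 1) * ((D:ℝ) + x + 2) / ((D:ℝ) * ((D:ℝ) + 2) * (2 * x + 1)) *
          (pp (x + 1) n * pp (j:ℝ) n / dd D n) -
        (3 - 6 * (j:ℝ) * ((j:ℝ) + 1) / ((D:ℝ) * ((D:ℝ) + 2))) * (pp x n * pp (j:ℝ) n / dd D n))
      = 0 := by
    rw [Finset.sum_congr rfl per, tele, f0, fs j, hz]
    simp
  rw [Finset.sum_sub_distrib, Finset.sum_add_distrib, Finset.sum_add_distrib,
    ← Finset.mul_sum, ← Finset.mul_sum, ← Finset.mul_sum, ← Finset.mul_sum] at main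
  linarith [main]

/-- `F4` as a sum over the uniform range `j+1`. -/
lemma F4_eq (D i j : ℕ) :
    F4 D i j = ∑ n ∈ Finset.range (j + 1), pp (i:ℝ) n * pp (j:ℝ) n / dd D n := by
  have e1 : F4 D i j = ∑ n ∈ Finset.range (min i j + 1), pp (i:ℝ) n * pp (j:ℝ) n / dd D n := by
    unfold F4 pp dd
    exact Finset.sum_congr rfl (fun n _ => by ring)
  rw [e1]
  apply Finset.sum_subset (Finset.range_subset_range.mpr (by omega))
  intro n hn hns
  have h1 : n ≤ j := Nat.lt_succ_iff.mp (Finset.mem_range.mp hn)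
  have h2 : i < n := by
    simp only [Finset.mem_range] at hns
    omega
  rw [pp, poch_cast_eq_zero h2, zero_mul, zero_mul, zero_div]

/-- The three-term recurrence at the level of `F4`. -/
lemma nat_key (D i j : ℕ) (hD : 1 ≤ D) (hi : i ≤ D) (hj : j ≤ D) :
    cc D i * F4 D (i - 1) j + aa D i * F4 D i j + bb D i * F4 D (i + 1) j
      = theta D j * F4 D i j := by
  rw [F4_eq D (i-1) j, F4_eq D i j, F4_eq D (i+1) j]
  simp only [cc, aa, bb, theta]
  match i with
  | 0 =>
    have key := sum_key D j hD hj (0:ℝ) (by norm_num)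
    push_cast at key ⊢
    norm_num at key ⊢
    linear_combination key
  | Nat.succ m =>
    have key := sum_key D j hD hj ((m:ℝ) + 1) (by positivity)
    push_cast at key ⊢
    norm_num at key ⊢
    linear_combination key

end PAux
end PAuxSection

open PAux in
theorem PAstar_eq_AP (D : ℕ) (hD : 0 < D) : Pmat D * Astar D = Amat D * Pmat D := by
  ext i j
  have hi : (i : ℕ) ≤ D := Nat.lt_succ_iff.mp i.isLt
  have hj : (j : ℕ) ≤ D := Nat.lt_succ_iff.mp j.isLt
  set Q : ℕ → ℝ := fun m => (2 * ((j : ℕ) : ℝ) + 1) * F4 D m (j : ℕ) with hQdef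
  have hL : (Pmat D * Astar D) i j = Q (i : ℕ) * theta D (j : ℕ) := by
    rw [Astar, Matrix.mul_diagonal]
    rfl
  have hR : (Amat D * Pmat D) i j
      = ∑ m ∈ Finset.range (D + 1),
          (if (i : ℕ) = m then aa D (i : ℕ)
           else if m = (i : ℕ) + 1 then bb D (i : ℕ)
           else if (i : ℕ) = m + 1 then cc D (i : ℕ) else 0) * Q m := by
    rw [Matrix.mul_apply]
    exact Fin.sum_univ_eq_sum_range
      (fun m => (if (i : ℕ) = m then aa D (i : ℕ)
        else if m = (i : ℕ) + 1 then bb D (i : ℕ)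
        else if (i : ℕ) = m + 1 then cc D (i : ℕ) else 0) * Q m) (D + 1)
  have split : ∀ m ∈ Finset.range (D + 1),
      (if (i : ℕ) = m then aa D (i : ℕ)
        else if m = (i : ℕ) + 1 then bb D (i : ℕ)
        else if (i : ℕ) = m + 1 then cc D (i : ℕ) else 0) * Q m
      = (if (i : ℕ) = m then aa D (i : ℕ) * Q m else 0)
        + ((if m = (i : ℕ) + 1 then bb D (i : ℕ) * Q m else 0)
        + (if (i : ℕ) = m + 1 then cc D (i : ℕ) * Q m else 0)) := by
    intro m _
    split_ifs with h1 h2 h3 <;> try ring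
    all_goals omega
  have S1 : ∑ m ∈ Finset.range (D + 1), (if (i : ℕ) = m then aa D (i : ℕ) * Q m else 0)
      = aa D (i : ℕ) * Q (i : ℕ) := by
    rw [Finset.sum_ite_eq]
    rw [if_pos (Finset.mem_range.mpr (by omega))]
  have S2 : ∑ m ∈ Finset.range (D + 1), (if m = (i : ℕ) + 1 then bb D (i : ℕ) * Q m else 0)
      = bb D (i : ℕ) * Q ((i : ℕ) + 1) := by
    rw [Finset.sum_ite_eq']
    by_cases h : (i : ℕ) + 1 ≤ D
    · rw [if_pos (Finset.mem_range.mpr (by omega))]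
    · have hiD : (i : ℕ) = D := by omega
      have hb : bb D (i : ℕ) = 0 := by
        rw [bb, hiD]
        simp
      rw [hb, zero_mul, if_neg (by simp only [Finset.mem_range]; omega)]
  have S3 : ∑ m ∈ Finset.range (D + 1), (if (i : ℕ) = m + 1 then cc D (i : ℕ) * Q m else 0)
      = cc D (i : ℕ) * Q ((i : ℕ) - 1) := by
    match hc : (i : ℕ) with
    | 0 =>
      rw [Finset.sum_eq_zero (fun m _ => by simp)]
      have : cc D 0 = 0 := by rw [cc]; simp
      rw [this, zero_mul]
    | Nat.succ s =>
      rw [Finset.sum_eq_single s]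
      · simp
      · intro b _ hb
        rw [if_neg (by omega)]
      · intro hs
        exact absurd (Finset.mem_range.mpr (by omega)) hs
  rw [hL, hR, Finset.sum_congr rfl split, Finset.sum_add_distrib, S1,
    Finset.sum_add_distrib, S2, S3]
  have hQ := nat_key D (i : ℕ) (j : ℕ) hD hi hj
  simp only [hQdef]
  linear_combination (-(2 * ((j : ℕ) : ℝ) + 1)) * hQ
end
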